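/- Let L : ℝᵐ × ℝⁿ → ℝ be C² and fix x, θ with g := ∇ₓL(x,θ) ≠ 0. Let F : ℝⁿ → ℝⁿ be any map and suppose the bilinear form B := D²_{xθ}L(x,θ) satisfies ⟨B(F(θ)), g⟩ > 0. Then there exist α₀, β₀ > 0 such that for all α ∈ (0, α₀) and β ∈ (0, β₀) with β sufficiently small relative to α, L(x + β∇ₓL(x, θ + αF(θ)), θ) > L(x + βg, θ) + (1/2)βα⟨B(F(θ)), g⟩. -/

import Mathlib

open Set RealInnerProductSpace

private lemma slope_aux {f : ℝ → ℝ} {d t : ℝ} (hf : HasDerivAt f d 0) (ht : t < d) :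
    ∃ ε > 0, ∀ β ∈ Ioo (0:ℝ) ε, t * β < f β - f 0 := by
  have h1 : Filter.Tendsto (slope f 0) (nhdsWithin 0 (Ioi 0)) (nhds d) :=
    (hasDerivAt_iff_tendsto_slope.mp hf).mono_left
      (nhdsWithin_mono _ (fun y hy => ne_of_gt hy))
  have h2 : {β : ℝ | t < slope f 0 β} ∈ nhdsWithin (0:ℝ) (Ioi 0) :=
    h1.eventually (eventually_gt_nhds ht)
  obtain ⟨u, hu, hsub⟩ := mem_nhdsGT_iff_exists_Ioo_subset.mp h2
  refine ⟨u, hu, fun β hβ => ?_⟩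
  have h3 : t < slope f 0 β := hsub hβ
  rw [slope_def_field, sub_zero] at h3
  have hβ0 : (0:ℝ) < β := hβ.1
  exact (lt_div_iff₀ hβ0).mp h3

set_option maxHeartbeats 1000000 in
/-- Let `L : ℝᵐ × ℝⁿ → ℝ` be C², fix `x, θ` with
`g := ∇ₓL(x,θ) ≠ 0`. Let `F : ℝⁿ → ℝⁿ` and suppose the mixed second derivative
`B := D²_{xθ}L(x,θ)` (the derivative in `θ` of `θ' ↦ ∇ₓL(x,θ')`) satisfies
`⟨B(F(θ)), g⟩ > 0`. Then there exists `α₀ > 0` such that for every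
`α ∈ (0, α₀)` there exists `β₀ > 0` (i.e. `β` sufficiently small relative to `α`)
such that for all `β ∈ (0, β₀)`,
`L(x + β∇ₓL(x, θ + αF(θ)), θ) > L(x + βg, θ) + (1/2)βα⟨B(F(θ)), g⟩`. -/
theorem stmt12 (m n : ℕ)
    (L : EuclideanSpace ℝ (Fin m) × EuclideanSpace ℝ (Fin n) → ℝ)
    (hL : ContDiff ℝ 2 L)
    (x : EuclideanSpace ℝ (Fin m)) (θ : EuclideanSpace ℝ (Fin n))
    (g : EuclideanSpace ℝ (Fin m))
    (hg : g = gradient (fun x' => L (x', θ)) x) (hg0 : g ≠ 0)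
    (F : EuclideanSpace ℝ (Fin n) → EuclideanSpace ℝ (Fin n))
    (B : EuclideanSpace ℝ (Fin n) → EuclideanSpace ℝ (Fin m))
    (hB : B = fderiv ℝ (fun θ' => gradient (fun x' => L (x', θ')) x) θ)
    (hpos : 0 < ⟪B (F θ), g⟫) :
    ∃ α₀ > 0, ∀ α ∈ Ioo (0 : ℝ) α₀, ∃ β₀ > 0, ∀ β ∈ Ioo (0 : ℝ) β₀,
      L (x + β • gradient (fun x' => L (x', θ + α • F θ)) x, θ)
        > L (x + β • g, θ) + (1 / 2) * β * α * ⟪B (F θ), g⟫ := by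
  have hLd : Differentiable ℝ L := hL.differentiable (by norm_num)
  set c := ⟪B (F θ), g⟫ with hc
  set G : EuclideanSpace ℝ (Fin n) → EuclideanSpace ℝ (Fin m) :=
    fun θ' => gradient (fun x' => L (x', θ')) x with hGdef
  have hGeq : G = fun θ' => (InnerProductSpace.toDual ℝ (EuclideanSpace ℝ (Fin m))).symm
      ((fderiv ℝ L (x, θ')).comp
        (ContinuousLinearMap.inl ℝ (EuclideanSpace ℝ (Fin m)) (EuclideanSpace ℝ (Fin n)))) := by
    funext θ'
    have h1 : HasFDerivAt (fun x' => L (x', θ'))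
        ((fderiv ℝ L (x, θ')).comp
          (ContinuousLinearMap.inl ℝ (EuclideanSpace ℝ (Fin m)) (EuclideanSpace ℝ (Fin n)))) x :=
      (hLd (x, θ')).hasFDerivAt.comp x (hasFDerivAt_prodMk_left x θ')
    simp only [hGdef, gradient, h1.fderiv]
  have hGdiff : DifferentiableAt ℝ G θ := by
    rw [hGeq]
    have hf : Differentiable ℝ (fderiv ℝ L) :=
      (hL.fderiv_right (m := 1) (by norm_num)).differentiable one_ne_zero
    have h2 : DifferentiableAt ℝ (fun θ' => fderiv ℝ L (x, θ')) θ :=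
      (hf (x, θ)).comp θ (DifferentiableAt.prodMk (differentiableAt_const x) differentiableAt_id)
    exact ((InnerProductSpace.toDual ℝ
      (EuclideanSpace ℝ (Fin m))).symm.differentiable.differentiableAt).comp θ
      (h2.clm_comp (differentiableAt_const _))
  set B' := fderiv ℝ G θ with hB'
  have hGF : HasFDerivAt G B' θ := hGdiff.hasFDerivAt
  have hBB : ∀ v, B v = B' v := by intro v; rw [hB]
  have hGθ : G θ = g := by rw [hGdef]; exact hg.symm
  -- Step 1: derivative in α
  have hγ : HasDerivAt (fun α : ℝ => θ + α • F θ) (F θ) 0 := by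
    simpa using ((hasDerivAt_id (0:ℝ)).smul_const (F θ)).const_add θ
  have h3 : HasDerivAt (fun α : ℝ => G (θ + α • F θ)) (B' (F θ)) 0 := by
    have := hGF
    have h4 : HasFDerivAt G B' ((fun α : ℝ => θ + α • F θ) 0) := by simpa using hGF
    simpa [Function.comp_def] using h4.comp_hasDerivAt 0 hγ
  have hη : HasDerivAt (fun α : ℝ => ⟪g, G (θ + α • F θ)⟫) c 0 := by
    have h5 : HasFDerivAt (innerSL ℝ g) (innerSL ℝ g) ((fun α : ℝ => G (θ + α • F θ)) 0) :=
      (innerSL ℝ g).hasFDerivAt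
    have h6 := h5.comp_hasDerivAt 0 h3
    have hcc : (innerSL ℝ g) (B' (F θ)) = c := by
      rw [hc, hBB, innerSL_apply_apply]; exact real_inner_comm (B' (F θ)) g
    simpa [Function.comp_def, hcc] using h6
  obtain ⟨α₀, hα₀, hstep1⟩ := slope_aux hη (by linarith : (3/4) * c < c)
  refine ⟨α₀, hα₀, fun α hα => ?_⟩
  have hα0 : (0:ℝ) < α := hα.1
  set gα := G (θ + α • F θ) with hgα
  have hkey : (3/4) * c * α < ⟪g, gα⟫ - ⟪g, g⟫ := by
    have := hstep1 α hα
    simpa [hGθ] using this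
  -- Step 2: derivative in β
  have hxdiff : DifferentiableAt ℝ (fun x' => L (x', θ)) x :=
    (hLd (x, θ)).comp x (DifferentiableAt.prodMk differentiableAt_id (differentiableAt_const θ))
  have hxg : HasGradientAt (fun x' => L (x', θ)) g x := by
    rw [hg]; exact hxdiff.hasGradientAt
  have hlin : ∀ v : EuclideanSpace ℝ (Fin m),
      HasDerivAt (fun β : ℝ => L (x + β • v, θ)) ⟪g, v⟫ 0 := by
    intro v
    have hline : HasDerivAt (fun β : ℝ => x + β • v) v 0 := by
      simpa using ((hasDerivAt_id (0:ℝ)).smul_const v).const_add x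
    have h7 : HasFDerivAt (fun x' => L (x', θ))
        ((InnerProductSpace.toDual ℝ (EuclideanSpace ℝ (Fin m))) g)
        ((fun β : ℝ => x + β • v) 0) := by simpa using hxg.hasFDerivAt
    have h8 := h7.comp_hasDerivAt 0 hline
    simpa [Function.comp_def, InnerProductSpace.toDual_apply_apply] using h8
  have hψ : HasDerivAt (fun β : ℝ => L (x + β • gα, θ) - L (x + β • g, θ))
      (⟪g, gα⟫ - ⟪g, g⟫) 0 := (hlin gα).sub (hlin g)
  have ht2 : (1/2) * α * c < ⟪g, gα⟫ - ⟪g, g⟫ := by nlinarith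
  obtain ⟨β₀, hβ₀, hstep2⟩ := slope_aux hψ ht2
  refine ⟨β₀, hβ₀, fun β hβ => ?_⟩
  have := hstep2 β hβ
  simp only [zero_smul, add_zero, sub_self] at this
  have hc2 : L (x + β • gα, θ) - L (x + β • g, θ) > (1/2) * α * c * β := by
    simpa using this
  have hfin : L (x + β • gα, θ) > L (x + β • g, θ) + (1/2) * β * α * c := by nlinarith [hc2]
  have hre : gα = gradient (fun x' => L (x', θ + α • F θ)) x := by rw [hgα, hGdef]
  rw [← hre]
  exact hfin
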